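/- For any positive integer t and any graphs H1, H2 each with treewidth at most t, the strong product G := H1 ⊠ H2 has a 2-colouring in which every monochromatic component has at most 2·((t+1)·|V(G)|)^{2/3} vertices. -/

import Mathlib

open SimpleGraph

universe u v

/-- The strong product of two simple graphs. -/
def StrongProd {α : Type u} {β : Type v} (G : SimpleGraph α) (H : SimpleGraph β) :
    SimpleGraph (α × β) where
  Adj x y := (x.1 = y.1 ∧ H.Adj x.2 y.2) ∨ (x.2 = y.2 ∧ G.Adj x.1 y.1) ∨
    (G.Adj x.1 y.1 ∧ H.Adj x.2 y.2)
  symm := by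
    constructor
    rintro x y (⟨h1, h2⟩ | ⟨h1, h2⟩ | ⟨h1, h2⟩)
    · exact Or.inl ⟨h1.symm, h2.symm⟩
    · exact Or.inr (Or.inl ⟨h1.symm, h2.symm⟩)
    · exact Or.inr (Or.inr ⟨h1.symm, h2.symm⟩)
  loopless := by
    constructor
    rintro x (⟨h1, h2⟩ | ⟨h1, h2⟩ | ⟨h1, h2⟩)
    · exact h2.ne rfl
    · exact h2.ne rfl
    · exact h1.ne rfl

/-- The fan graph `F_n`: a path on `n` vertices (vertices `1,…,n`) together with
one dominant vertex (vertex `0`) adjacent to all path vertices. -/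
def Fan (n : ℕ) : SimpleGraph (Fin (n + 1)) :=
  SimpleGraph.fromRel (fun u v => u = 0 ∨ u.val + 1 = v.val)

/-- The cone over `m` disjoint copies of `G`: `m` pairwise disjoint copies of `G`
together with one new vertex adjacent to every vertex of every copy. -/
def GraphCone {V : Type u} (m : ℕ) (G : SimpleGraph V) :
    SimpleGraph (Option (Fin m × V)) where
  Adj x y :=
    match x, y with
    | none, none => False
    | none, some _ => True
    | some _, none => True
    | some (i, _u), some (j, _v) => i = j ∧ G.Adj _u _v
  symm := by
    constructor
    rintro (_ | ⟨i, u⟩) (_ | ⟨j, v⟩) h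
    · exact h
    · trivial
    · trivial
    · exact ⟨h.1.symm, h.2.symm⟩
  loopless := by
    constructor
    rintro (_ | ⟨i, u⟩) h
    · exact h
    · exact h.2.ne rfl

/-- `G` has a tree-decomposition of width at most `t`. -/
def TreewidthLE {V : Type u} (G : SimpleGraph V) (t : ℕ) : Prop :=
  ∃ (ι : Type) (T : SimpleGraph ι) (W : ι → Finset V),
    T.IsTree ∧
    (∀ ⦃u v : V⦄, G.Adj u v → ∃ x, u ∈ W x ∧ v ∈ W x) ∧
    (∀ v : V, (T.induce {x | v ∈ W x}).Connected) ∧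
    (∀ x, (W x).card ≤ t + 1)

/-- A set of vertices is monochromatic under a colouring `f`. -/
def IsMonochromatic {V : Type u} {c : ℕ} (f : V → Fin c) (S : Finset V) : Prop :=
  ∀ u ∈ S, ∀ v ∈ S, f u = f v

/-- Every monochromatic component of the colouring `f` of `G` has at most `k` vertices. -/
def ClusterLE {V : Type u} {c : ℕ} (G : SimpleGraph V) (f : V → Fin c) (k : ℕ) : Prop :=
  ∀ S : Finset V, IsMonochromatic f S → (G.induce (S : Set V)).Connected → S.card ≤ k

/-- Every monochromatic component of the colouring `f` of `G` has at most `b` vertices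
(real-valued bound). -/
def ClusterLEReal {V : Type u} {c : ℕ} (G : SimpleGraph V) (f : V → Fin c) (b : ℝ) : Prop :=
  ∀ S : Finset V, IsMonochromatic f S → (G.induce (S : Set V)).Connected → (S.card : ℝ) ≤ b

section Helpers
variable {α : Type*}

lemma walk_induce_lift {T : SimpleGraph α} {s : Set α} :
    ∀ {a b : ↥s} (w : (T.induce s).Walk a b), ∃ p : T.Walk ↑a ↑b, ∀ z ∈ p.support, z ∈ s := by
  intro a b w
  induction w with
  | nil => exact ⟨.nil, by simp [a.2]⟩
  | @cons a c b h p ih =>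
      obtain ⟨q, hq⟩ := ih
      have h' : T.Adj a c := h
      refine ⟨.cons h' q, ?_⟩
      intro z hz
      rw [SimpleGraph.Walk.support_cons, List.mem_cons] at hz
      rcases hz with rfl | hz
      · exact a.2
      · exact hq z hz

lemma tree_adj_not_reach {T : SimpleGraph α} (hT : T.IsTree) {x c₁ c₂ : α}
    (h₁ : T.Adj x c₁) (h₂ : T.Adj x c₂) (hne : c₁ ≠ c₂) {w : T.Walk c₁ c₂}
    (hw : x ∉ w.support) : False := by
  classical
  obtain ⟨p, hp, hu⟩ := hT.existsUnique_path c₁ c₂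
  have hP1 : (SimpleGraph.Walk.cons h₁.symm (SimpleGraph.Walk.cons h₂ SimpleGraph.Walk.nil) :
      T.Walk c₁ c₂).IsPath := by
    rw [SimpleGraph.Walk.isPath_def]
    simp [h₁.ne', h₂.ne, hne]
  have e1 := hu _ hP1
  have e2 := hu _ (w.toPath : T.Path c₁ c₂).2
  have : x ∈ p.support := by rw [← e1]; simp
  rw [← e2] at this
  exact hw (SimpleGraph.Walk.support_toPath_subset w this)

end Helpers

lemma chunk {V : Type u} [Fintype V] (G : SimpleGraph V) (t m : ℕ) (h : TreewidthLE G t)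
    (hn : m < Fintype.card V) :
    ∃ (B X : Finset V), B.card ≤ t + 1 ∧ m < X.card ∧
      (∀ A : Finset V, (∀ a ∈ A, a ∈ X ∧ a ∉ B) → (G.induce (A : Set V)).Connected →
        A.card ≤ m) ∧
      (∀ u v : V, G.Adj u v → u ∈ X → u ∉ B → (v ∈ X ∨ v ∈ B)) := by
  classical
  obtain ⟨ι, T, W, hT, hE, hC, hcard⟩ := h
  have hTconn : T.Connected := hT.isConnected
  -- choice of a bag for every vertex
  have hbag : ∀ v : V, ∃ y : ι, v ∈ W y := by
    intro v
    obtain ⟨y⟩ := (hC v).nonempty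
    exact ⟨y.1, y.2⟩
  have hV : Nonempty V := by
    rw [← Fintype.card_pos_iff]; omega
  obtain ⟨v₀⟩ := hV
  obtain ⟨r, -⟩ := hbag v₀
  -- the set of nodes "below or equal" x
  let Kp : ι → ι → Prop := fun x y => ∀ w : T.Walk r y, x ∈ w.support
  let XF : ι → Finset V := fun x =>
    Finset.univ.filter (fun v => ∀ y : ι, v ∈ W y → Kp x y)
  let h₀ : V → ι := fun v => (hbag v).choose
  have h₀mem : ∀ v, v ∈ W (h₀ v) := fun v => (hbag v).choose_spec
  let Vi : ι → Prop := fun x => m < (XF x).card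
  have memXF : ∀ (x : ι) (v : V), v ∈ XF x ↔ ∀ y : ι, v ∈ W y → Kp x y := by
    intro x v; simp [XF]
  have hVir : Vi r := by
    have : XF r = Finset.univ := by
      apply Finset.eq_univ_of_forall
      intro v
      rw [memXF]
      intro y hy w
      exact w.start_mem_support
    show m < (XF r).card
    rw [this, Finset.card_univ]; exact hn
  let d : ι → ℕ := fun x => T.dist r x
  let D : ℕ := Finset.univ.sup (fun v : V => d (h₀ v))
  have hdepth : ∀ x : ι, Vi x → d x ≤ D := by
    intro x hx
    have hne : (XF x).Nonempty := Finset.card_pos.mp (by omega)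
    obtain ⟨v, hv⟩ := hne
    rw [memXF] at hv
    have hk : Kp x (h₀ v) := hv _ (h₀mem v)
    obtain ⟨w, hw⟩ := (hTconn r (h₀ v)).exists_walk_length_eq_dist
    obtain ⟨q, q', hqq⟩ := SimpleGraph.Walk.mem_support_iff_exists_append.mp (hk w)
    have h1 : T.dist r x ≤ q.length := SimpleGraph.dist_le q
    have h2 : q.length ≤ w.length := by
      rw [hqq, SimpleGraph.Walk.length_append]; omega
    have : d x ≤ d (h₀ v) := by
      show T.dist r x ≤ T.dist r (h₀ v); omega
    exact le_trans this (Finset.le_sup (f := fun v : V => d (h₀ v)) (Finset.mem_univ v))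
  -- choose a deepest violator
  let jset : Finset ℕ := (Finset.range (D + 1)).filter (fun j => ∃ x, Vi x ∧ d x = j)
  have hjne : jset.Nonempty := by
    refine ⟨d r, ?_⟩
    simp only [jset, Finset.mem_filter, Finset.mem_range]
    exact ⟨by have := hdepth r hVir; omega, r, hVir, rfl⟩
  obtain ⟨xs, hxsVi, hxsd⟩ : ∃ x, Vi x ∧ d x = jset.max' hjne := by
    have := jset.max'_mem hjne
    simp only [jset, Finset.mem_filter, Finset.mem_range] at this
    exact this.2
  have hmax : ∀ c : ι, Vi c → d c ≤ d xs := by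
    intro c hc
    rw [hxsd]
    apply Finset.le_max'
    simp only [jset, Finset.mem_filter, Finset.mem_range]
    exact ⟨by have := hdepth c hc; omega, c, hc, rfl⟩
  refine ⟨W xs, XF xs, hcard xs, hxsVi, ?_, ?_⟩
  · -- small components
    intro A hA hconn
    rcases A.eq_empty_or_nonempty with rfl | ⟨a, ha⟩
    · simp
    obtain ⟨haX, haB⟩ := hA a ha
    rw [memXF] at haX
    -- a path from r to y₀ := h₀ a
    set y₀ := h₀ a with hy₀
    have hKy₀ : Kp xs y₀ := haX _ (h₀mem a)
    have hy₀ne : y₀ ≠ xs := by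
      intro hh; exact haB (by rw [← hh]; exact h₀mem a)
    obtain ⟨w0⟩ := hTconn r y₀
    set p : T.Walk r y₀ := (w0.toPath : T.Path r y₀).1 with hpdef
    have hpIsPath : p.IsPath := (w0.toPath).2
    have hxp : xs ∈ p.support := hKy₀ p
    have hxtail : xs ∉ (p.dropUntil xs hxp).support.tail := by
      intro hcon
      have hnd := hpIsPath.support_nodup
      have hsupp : p.support
          = (p.takeUntil xs hxp).support ++ (p.dropUntil xs hxp).support.tail := by
        conv_lhs => rw [← p.take_spec hxp]
        exact SimpleGraph.Walk.support_append _ _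
      rw [hsupp, List.nodup_append] at hnd
      exact hnd.2.2 _ (SimpleGraph.Walk.end_mem_support _) _ hcon rfl
    obtain ⟨c, hadj, q₃, hq₃eq⟩ :=
      SimpleGraph.Walk.exists_eq_cons_of_ne (Ne.symm hy₀ne) (p.dropUntil xs hxp)
    have hxq₃ : xs ∉ q₃.support := by
      rw [hq₃eq, SimpleGraph.Walk.support_cons] at hxtail
      exact hxtail
    -- every walk from r to c passes xs
    have hKc : ∀ w : T.Walk r c, xs ∈ w.support := by
      intro u
      by_contra hu
      have := hKy₀ (u.append q₃)
      rw [SimpleGraph.Walk.mem_support_append_iff] at this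
      rcases this with h1 | h1
      · exact hu h1
      · exact hxq₃ h1
    -- depth of c exceeds depth of xs
    have hdc : d xs < d c := by
      obtain ⟨ws, hws⟩ := (hTconn r c).exists_walk_length_eq_dist
      obtain ⟨qa, qb, hqab⟩ := SimpleGraph.Walk.mem_support_iff_exists_append.mp (hKc ws)
      have h1 : T.dist r xs ≤ qa.length := SimpleGraph.dist_le qa
      have h2 : 0 < T.dist xs c := hTconn.pos_dist_of_ne hadj.ne
      have h3 : T.dist xs c ≤ qb.length := SimpleGraph.dist_le qb
      have h4 : ws.length = qa.length + qb.length := by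
        rw [hqab, SimpleGraph.Walk.length_append]
      show T.dist r xs < T.dist r c
      omega
    have hXFc : (XF c).card ≤ m := by
      by_contra hcon
      have := hmax c (by exact lt_of_not_ge (fun hh => hcon (by omega)))
      omega
    -- A is contained in XF c
    have hsub : A ⊆ XF c := by
      -- property P
      set P : V → Prop := fun v => ∀ y : ι, v ∈ W y → ∃ qq : T.Walk y₀ y, xs ∉ qq.support
        with hPdef
      have hPa : P a := by
        intro y hy
        obtain ⟨wi⟩ := (hC a).preconnected ⟨y₀, h₀mem a⟩ ⟨y, hy⟩
        obtain ⟨q, hq⟩ := walk_induce_lift wi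
        exact ⟨q, fun hcon => haB (hq xs hcon)⟩
      have hPstep : ∀ u u' : V, G.Adj u u' → u' ∉ W xs → P u → P u' := by
        intro u u' hadj' hu'B hPu
        obtain ⟨y₁, hy₁u, hy₁u'⟩ := hE hadj'
        obtain ⟨qq₁, hqq₁⟩ := hPu y₁ hy₁u
        intro y hy
        obtain ⟨wi⟩ := (hC u').preconnected ⟨y₁, hy₁u'⟩ ⟨y, hy⟩
        obtain ⟨q, hq⟩ := walk_induce_lift wi
        refine ⟨qq₁.append q, ?_⟩
        rw [SimpleGraph.Walk.mem_support_append_iff]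
        rintro (h1 | h1)
        · exact hqq₁ h1
        · exact hu'B (hq xs h1)
      have hwalkP : ∀ (u v : ↥(A : Set V)) (w : (G.induce (A : Set V)).Walk u v),
          P ↑u → P ↑v := by
        intro u v w
        induction w with
        | nil => exact id
        | @cons u u₂ v hadj' w' ih =>
            intro hPu
            have hu₂A : (u₂ : V) ∈ A := u₂.2
            exact ih (hPstep _ _ hadj' (hA _ hu₂A).2 hPu)
      have hPall : ∀ v ∈ A, P v := by
        intro v hv
        obtain ⟨w⟩ := hconn.preconnected ⟨a, by simpa using ha⟩ ⟨v, by simpa using hv⟩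
        exact hwalkP _ _ w hPa
      intro v hv
      rw [memXF]
      intro y hyv
      have hyne : y ≠ xs := fun hh => (hA v hv).2 (by rw [← hh]; exact hyv)
      obtain ⟨qq, hqq⟩ := hPall v hv y hyv
      -- show Kp c y
      intro ww
      by_contra hcw
      set pp : T.Walk r y := (ww.toPath : T.Path r y).1 with hppdef
      have hppPath : pp.IsPath := (ww.toPath).2
      have hcp : c ∉ pp.support := fun hc =>
        hcw (SimpleGraph.Walk.support_toPath_subset ww hc)
      have hxpp : xs ∈ pp.support := by
        by_contra hxn
        have := hKy₀ (pp.append qq.reverse)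
        rw [SimpleGraph.Walk.mem_support_append_iff] at this
        rcases this with h1 | h1
        · exact hxn h1
        · rw [SimpleGraph.Walk.support_reverse, List.mem_reverse] at h1
          exact hqq h1
      have hxtail' : xs ∉ (pp.dropUntil xs hxpp).support.tail := by
        intro hcon
        have hnd := hppPath.support_nodup
        have hsupp : pp.support
            = (pp.takeUntil xs hxpp).support ++ (pp.dropUntil xs hxpp).support.tail := by
          conv_lhs => rw [← pp.take_spec hxpp]
          exact SimpleGraph.Walk.support_append _ _
        rw [hsupp, List.nodup_append] at hnd
        exact hnd.2.2 _ (SimpleGraph.Walk.end_mem_support _) _ hcon rfl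
      obtain ⟨c₁, hadj₁, q₃', hq₃'eq⟩ :=
        SimpleGraph.Walk.exists_eq_cons_of_ne (Ne.symm hyne) (pp.dropUntil xs hxpp)
      have hxq₃' : xs ∉ q₃'.support := by
        rw [hq₃'eq, SimpleGraph.Walk.support_cons] at hxtail'
        exact hxtail'
      have hcq₃' : c ∉ q₃'.support := by
        intro hcon
        apply hcp
        apply SimpleGraph.Walk.support_dropUntil_subset pp hxpp
        rw [hq₃'eq, SimpleGraph.Walk.support_cons]
        exact List.mem_cons_of_mem _ hcon
      have hc₁c : c₁ ≠ c := by
        intro hh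
        exact hcq₃' (hh ▸ q₃'.start_mem_support)
      -- a walk from c₁ to c avoiding xs
      have hwalk : ∃ wcc : T.Walk c₁ c, xs ∉ wcc.support := by
        refine ⟨q₃'.append (q₃.append qq).reverse, ?_⟩
        rw [SimpleGraph.Walk.mem_support_append_iff]
        rintro (h1 | h1)
        · exact hxq₃' h1
        · rw [SimpleGraph.Walk.support_reverse, List.mem_reverse,
            SimpleGraph.Walk.mem_support_append_iff] at h1
          rcases h1 with h1 | h1
          · exact hxq₃ h1
          · exact hqq h1
      obtain ⟨wcc, hwcc⟩ := hwalk
      exact tree_adj_not_reach hT hadj₁ hadj hc₁c hwcc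
    calc A.card ≤ (XF c).card := Finset.card_le_card hsub
      _ ≤ m := hXFc
  · -- separation
    intro u vv hadj huX huB
    by_contra hcon
    push_neg at hcon
    obtain ⟨hvX, hvB⟩ := hcon
    obtain ⟨y, hyu, hyv⟩ := hE hadj
    rw [memXF] at huX
    have hKy : Kp xs y := huX y hyu
    have hyne : y ≠ xs := fun hh => huB (by rw [← hh]; exact hyu)
    rw [memXF] at hvX
    push_neg at hvX
    obtain ⟨y', hy'v, hy'K⟩ := hvX
    rw [show ¬ Kp xs y' ↔ ∃ w : T.Walk r y', xs ∉ w.support from by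
      simp [Kp, not_forall]] at hy'K
    obtain ⟨w', hw'⟩ := hy'K
    -- walk from y' to y inside bags of vv
    have hreach : ((T.induce {z : ι | vv ∈ W z}).Reachable ⟨y', hy'v⟩ ⟨y, hyv⟩) :=
      (hC vv).preconnected _ _
    obtain ⟨wi⟩ := hreach
    obtain ⟨q, hq⟩ := walk_induce_lift wi
    have hxq : xs ∉ q.support := fun hcon => hvB (hq xs hcon)
    have := hKy (w'.append q)
    rw [SimpleGraph.Walk.mem_support_append_iff] at this
    rcases this with h1 | h1
    · exact hw' h1
    · exact hxq h1

lemma tw_induce {V : Type u} (G : SimpleGraph V) (t : ℕ) (h : TreewidthLE G t) (s : Set V) :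
    TreewidthLE (G.induce s) t := by
  classical
  obtain ⟨ι, T, W, hT, hE, hC, hcard⟩ := h
  refine ⟨ι, T, fun x => (W x).subtype (fun v => v ∈ s), hT, ?_, ?_, ?_⟩
  · intro u v huv
    obtain ⟨x, hxu, hxv⟩ := hE huv
    exact ⟨x, Finset.mem_subtype.mpr hxu, Finset.mem_subtype.mpr hxv⟩
  · intro v
    have : {x : ι | v ∈ (W x).subtype (fun v => v ∈ s)} = {x : ι | (v : V) ∈ W x} := by
      ext x; simp [Finset.mem_subtype]
    rw [this]
    exact hC v
  · intro x
    rw [Finset.card_subtype]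
    exact le_trans (Finset.card_filter_le _ _) (hcard x)

lemma sep_aux : ∀ (N : ℕ) {V : Type u} [Fintype V] (G : SimpleGraph V) (t m : ℕ),
    Fintype.card V ≤ N → TreewidthLE G t →
    ∃ S : Finset V, S.card ≤ (t + 1) * (Fintype.card V / (m + 1)) ∧
      ∀ A : Finset V, (∀ a ∈ A, a ∉ S) → (G.induce (A : Set V)).Connected → A.card ≤ m := by
  intro N
  induction N with
  | zero =>
      intro V _ G t m hN _
      refine ⟨∅, by simp, ?_⟩
      intro A _ _
      calc A.card ≤ Fintype.card V := A.card_le_univ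
        _ ≤ m := by omega
  | succ N ih =>
      intro V _ G t m hN htw
      classical
      by_cases hsmall : Fintype.card V ≤ m
      · refine ⟨∅, by simp, ?_⟩
        intro A _ _
        calc A.card ≤ Fintype.card V := A.card_le_univ
          _ ≤ m := hsmall
      push_neg at hsmall
      obtain ⟨B, X, hB, hX, hsmallcomp, hsep⟩ := chunk G t m htw hsmall
      set s : Set V := {v | v ∉ X} with hsdef
      have hcards : Fintype.card ↥s + X.card = Fintype.card V := by
        have h1 : Fintype.card ↥s = Fintype.card {v : V // ¬ v ∈ X} :=
          Fintype.card_congr (Equiv.subtypeEquivRight (fun v => by simp [hsdef]))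
      -- card of subtype
        rw [h1, Fintype.card_subtype_compl, Fintype.card_coe]
        have : X.card ≤ Fintype.card V := X.card_le_univ
        omega
      have hN' : Fintype.card ↥s ≤ N := by omega
      obtain ⟨S', hS'card, hS'comp⟩ := ih (G.induce s) t m hN' (tw_induce G t htw s)
      refine ⟨B ∪ S'.map (Function.Embedding.subtype _), ?_, ?_⟩
      · have h1 : (B ∪ S'.map (Function.Embedding.subtype _)).card ≤ B.card + S'.card := by
          rw [← Finset.card_map (Function.Embedding.subtype _) ]
          exact Finset.card_union_le _ _
        have h2 : Fintype.card ↥s / (m + 1) + 1 ≤ Fintype.card V / (m + 1) := by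
          have h3 : Fintype.card ↥s + (m + 1) ≤ Fintype.card V := by omega
          calc Fintype.card ↥s / (m + 1) + 1
              = (Fintype.card ↥s + (m + 1)) / (m + 1) := by
                rw [Nat.add_div_right _ (by omega)]
            _ ≤ Fintype.card V / (m + 1) := Nat.div_le_div_right h3
        calc (B ∪ S'.map (Function.Embedding.subtype _)).card
            ≤ B.card + S'.card := h1
          _ ≤ (t + 1) + (t + 1) * (Fintype.card ↥s / (m + 1)) := by
              exact Nat.add_le_add hB hS'card
          _ = (t + 1) * (Fintype.card ↥s / (m + 1) + 1) := by ring
          _ ≤ (t + 1) * (Fintype.card V / (m + 1)) := Nat.mul_le_mul_left _ h2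
      · intro A hA hconn
        have hAB : ∀ a ∈ A, a ∉ B := by
          intro a haA hcon
          exact hA a haA (Finset.mem_union_left _ hcon)
        by_cases hAX : ∃ a ∈ A, a ∈ X
        · -- A stays inside X \ B
          obtain ⟨a, haA, haX⟩ := hAX
          have hallX : ∀ v ∈ A, v ∈ X := by
            -- propagate along walks
            have hwalkX : ∀ (u v : ↥(A : Set V)) (w : (G.induce (A : Set V)).Walk u v),
                (u : V) ∈ X → (v : V) ∈ X := by
              intro u v w
              induction w with
              | nil => exact id
              | @cons u u₂ v hadj' w' ih2 =>
                  intro huX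
                  have h2 : (u₂ : V) ∈ X ∨ (u₂ : V) ∈ B :=
                    hsep _ _ hadj' huX (hAB _ u.2)
                  rcases h2 with h2 | h2
                  · exact ih2 h2
                  · exact absurd h2 (hAB _ u₂.2)
            intro v hv
            obtain ⟨w⟩ := hconn.preconnected ⟨a, by simpa using haA⟩ ⟨v, by simpa using hv⟩
            exact hwalkX _ _ w haX
          exact hsmallcomp A (fun v hv => ⟨hallX v hv, hAB v hv⟩) hconn
        · -- A avoids X entirely: use the recursive set S'
          push_neg at hAX
          have hAs : ∀ a ∈ A, a ∈ s := fun a haA => hAX a haA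
          set A' : Finset ↥s := A.subtype (fun v => v ∈ s) with hA'def
          have hA'card : A'.card = A.card := by
            rw [hA'def, Finset.card_subtype, Finset.filter_true_of_mem hAs]
          have hA'S' : ∀ a ∈ A', a ∉ S' := by
            intro a' ha' hcon
            apply hA a' (by rw [hA'def, Finset.mem_subtype] at ha'; exact ha')
            apply Finset.mem_union_right
            rw [Finset.mem_map]
            exact ⟨a', hcon, rfl⟩
          have hA'conn : ((G.induce s).induce (A' : Set ↥s)).Connected := by
            have hfun : ∀ v : ↥(A : Set V), (v : V) ∈ s := fun v => hAs v.1 (by simpa using v.2)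
            let f : G.induce (A : Set V) →g (G.induce s).induce (A' : Set ↥s) :=
              { toFun := fun v => ⟨⟨v.1, hfun v⟩, by
                  rw [Finset.mem_coe, hA'def, Finset.mem_subtype]
                  simpa using v.2⟩,
                map_rel' := fun h => h }
            apply hconn.map f
            rintro ⟨⟨v, hvs⟩, hvA'⟩
            rw [Finset.mem_coe, hA'def, Finset.mem_subtype] at hvA'
            exact ⟨⟨v, by simpa using hvA'⟩, rfl⟩
          rw [← hA'card]
          exact hS'comp A' hA'S' hA'conn

lemma sep_final {V : Type u} [Fintype V] (G : SimpleGraph V) (t m : ℕ) (h : TreewidthLE G t) :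
    ∃ S : Finset V, S.card ≤ (t + 1) * (Fintype.card V / (m + 1)) ∧
      ∀ A : Finset V, (∀ a ∈ A, a ∉ S) → (G.induce (A : Set V)).Connected → A.card ≤ m :=
  sep_aux (Fintype.card V) G t m le_rfl h

lemma proj_reach_fst {V₁ V₂ : Type*} {H₁ : SimpleGraph V₁} {H₂ : SimpleGraph V₂}
    [DecidableEq V₁] {A : Finset (V₁ × V₂)} :
    ∀ (p q : ↥((A : Set (V₁ × V₂)))) (w : ((StrongProd H₁ H₂).induce (A : Set (V₁ × V₂))).Walk p q),
    (H₁.induce ((A.image Prod.fst : Finset V₁) : Set V₁)).Reachable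
      ⟨(p : V₁ × V₂).1, Finset.mem_coe.mpr (Finset.mem_image_of_mem _ (Finset.mem_coe.mp p.2))⟩
      ⟨(q : V₁ × V₂).1, Finset.mem_coe.mpr (Finset.mem_image_of_mem _ (Finset.mem_coe.mp q.2))⟩ := by
  intro p q w
  induction w with
  | nil => rfl
  | @cons p c q hadj w' ih =>
      have hadj' : ((↑p : V₁ × V₂).1 = (↑c : V₁ × V₂).1 ∧ H₂.Adj (↑p : V₁ × V₂).2 (↑c : V₁ × V₂).2)
          ∨ ((↑p : V₁ × V₂).2 = (↑c : V₁ × V₂).2 ∧ H₁.Adj (↑p : V₁ × V₂).1 (↑c : V₁ × V₂).1)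
          ∨ (H₁.Adj (↑p : V₁ × V₂).1 (↑c : V₁ × V₂).1 ∧ H₂.Adj (↑p : V₁ × V₂).2 (↑c : V₁ × V₂).2) :=
        hadj
      rcases hadj' with ⟨h1, h2⟩ | ⟨h1, h2⟩ | ⟨h1, h2⟩
      · have he : (⟨(p : V₁ × V₂).1, Finset.mem_coe.mpr (Finset.mem_image_of_mem _ (Finset.mem_coe.mp p.2))⟩ :
            ↥((A.image Prod.fst : Finset V₁) : Set V₁))
            = ⟨(c : V₁ × V₂).1, Finset.mem_coe.mpr (Finset.mem_image_of_mem _ (Finset.mem_coe.mp c.2))⟩ :=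
          Subtype.ext h1
        rw [he]; exact ih
      · exact Reachable.trans (SimpleGraph.Adj.reachable (by exact h2)) ih
      · exact Reachable.trans (SimpleGraph.Adj.reachable (by exact h1)) ih

lemma proj_reach_snd {V₁ V₂ : Type*} {H₁ : SimpleGraph V₁} {H₂ : SimpleGraph V₂}
    [DecidableEq V₂] {A : Finset (V₁ × V₂)} :
    ∀ (p q : ↥((A : Set (V₁ × V₂)))) (w : ((StrongProd H₁ H₂).induce (A : Set (V₁ × V₂))).Walk p q),
    (H₂.induce ((A.image Prod.snd : Finset V₂) : Set V₂)).Reachable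
      ⟨(p : V₁ × V₂).2, Finset.mem_coe.mpr (Finset.mem_image_of_mem _ (Finset.mem_coe.mp p.2))⟩
      ⟨(q : V₁ × V₂).2, Finset.mem_coe.mpr (Finset.mem_image_of_mem _ (Finset.mem_coe.mp q.2))⟩ := by
  intro p q w
  induction w with
  | nil => rfl
  | @cons p c q hadj w' ih =>
      have hadj' : ((↑p : V₁ × V₂).1 = (↑c : V₁ × V₂).1 ∧ H₂.Adj (↑p : V₁ × V₂).2 (↑c : V₁ × V₂).2)
          ∨ ((↑p : V₁ × V₂).2 = (↑c : V₁ × V₂).2 ∧ H₁.Adj (↑p : V₁ × V₂).1 (↑c : V₁ × V₂).1)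
          ∨ (H₁.Adj (↑p : V₁ × V₂).1 (↑c : V₁ × V₂).1 ∧ H₂.Adj (↑p : V₁ × V₂).2 (↑c : V₁ × V₂).2) :=
        hadj
      rcases hadj' with ⟨h1, h2⟩ | ⟨h1, h2⟩ | ⟨h1, h2⟩
      · exact Reachable.trans (SimpleGraph.Adj.reachable (by exact h2)) ih
      · have he : (⟨(p : V₁ × V₂).2, Finset.mem_coe.mpr (Finset.mem_image_of_mem _ (Finset.mem_coe.mp p.2))⟩ :
            ↥((A.image Prod.snd : Finset V₂) : Set V₂))
            = ⟨(c : V₁ × V₂).2, Finset.mem_coe.mpr (Finset.mem_image_of_mem _ (Finset.mem_coe.mp c.2))⟩ :=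
          Subtype.ext h1
        rw [he]; exact ih
      · exact Reachable.trans (SimpleGraph.Adj.reachable (by exact h2)) ih

lemma proj_conn_fst {V₁ V₂ : Type*} {H₁ : SimpleGraph V₁} {H₂ : SimpleGraph V₂}
    [DecidableEq V₁] {A : Finset (V₁ × V₂)}
    (hconn : ((StrongProd H₁ H₂).induce (A : Set (V₁ × V₂))).Connected) :
    (H₁.induce ((A.image Prod.fst : Finset V₁) : Set V₁)).Connected := by
  rw [connected_iff]
  obtain ⟨⟨a, haA⟩⟩ := hconn.nonempty
  constructor
  · rintro ⟨u, hu⟩ ⟨v, hv⟩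
    obtain ⟨pu, hpuA, hpu1⟩ := Finset.mem_image.mp (Finset.mem_coe.mp hu)
    obtain ⟨pv, hpvA, hpv1⟩ := Finset.mem_image.mp (Finset.mem_coe.mp hv)
    obtain ⟨w⟩ := hconn.preconnected ⟨pu, Finset.mem_coe.mpr hpuA⟩ ⟨pv, Finset.mem_coe.mpr hpvA⟩
    have := proj_reach_fst _ _ w
    have heu : (⟨u, hu⟩ : ↥((A.image Prod.fst : Finset V₁) : Set V₁))
        = ⟨pu.1, Finset.mem_coe.mpr (Finset.mem_image_of_mem _ hpuA)⟩ := Subtype.ext hpu1.symm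
    have hev : (⟨v, hv⟩ : ↥((A.image Prod.fst : Finset V₁) : Set V₁))
        = ⟨pv.1, Finset.mem_coe.mpr (Finset.mem_image_of_mem _ hpvA)⟩ := Subtype.ext hpv1.symm
    rw [heu, hev]
    exact this
  · exact ⟨⟨a.1, Finset.mem_coe.mpr (Finset.mem_image_of_mem _ (Finset.mem_coe.mp haA))⟩⟩

lemma proj_conn_snd {V₁ V₂ : Type*} {H₁ : SimpleGraph V₁} {H₂ : SimpleGraph V₂}
    [DecidableEq V₂] {A : Finset (V₁ × V₂)}
    (hconn : ((StrongProd H₁ H₂).induce (A : Set (V₁ × V₂))).Connected) :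
    (H₂.induce ((A.image Prod.snd : Finset V₂) : Set V₂)).Connected := by
  rw [connected_iff]
  obtain ⟨⟨a, haA⟩⟩ := hconn.nonempty
  constructor
  · rintro ⟨u, hu⟩ ⟨v, hv⟩
    obtain ⟨pu, hpuA, hpu1⟩ := Finset.mem_image.mp (Finset.mem_coe.mp hu)
    obtain ⟨pv, hpvA, hpv1⟩ := Finset.mem_image.mp (Finset.mem_coe.mp hv)
    obtain ⟨w⟩ := hconn.preconnected ⟨pu, Finset.mem_coe.mpr hpuA⟩ ⟨pv, Finset.mem_coe.mpr hpvA⟩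
    have := proj_reach_snd _ _ w
    have heu : (⟨u, hu⟩ : ↥((A.image Prod.snd : Finset V₂) : Set V₂))
        = ⟨pu.2, Finset.mem_coe.mpr (Finset.mem_image_of_mem _ hpuA)⟩ := Subtype.ext hpu1.symm
    have hev : (⟨v, hv⟩ : ↥((A.image Prod.snd : Finset V₂) : Set V₂))
        = ⟨pv.2, Finset.mem_coe.mpr (Finset.mem_image_of_mem _ hpvA)⟩ := Subtype.ext hpv1.symm
    rw [heu, hev]
    exact this
  · exact ⟨⟨a.2, Finset.mem_coe.mpr (Finset.mem_image_of_mem _ (Finset.mem_coe.mp haA))⟩⟩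

/-- For graphs `H₁, H₂` of treewidth at most `t`, the strong product has a 2-colouring
with every monochromatic component of size at most `2((t+1)·|V|)^{2/3}`. -/
theorem two_colour_upper (t : ℕ) (ht : 0 < t) {V₁ V₂ : Type} [Fintype V₁] [Fintype V₂]
    (H₁ : SimpleGraph V₁) (H₂ : SimpleGraph V₂)
    (h₁ : TreewidthLE H₁ t) (h₂ : TreewidthLE H₂ t) :
    ∃ f : V₁ × V₂ → Fin 2, ClusterLEReal (StrongProd H₁ H₂) f
      (2 * (((t : ℝ) + 1) * (Fintype.card (V₁ × V₂) : ℝ)) ^ ((2 : ℝ) / 3)) := by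
  classical
  by_cases hn0 : Fintype.card (V₁ × V₂) = 0
  · refine ⟨fun _ => 0, ?_⟩
    intro S _ _
    have hS : S.card = 0 := by
      have h := S.card_le_univ
      omega
    rw [hS, hn0]
    norm_num [Real.zero_rpow]
  -- nontrivial case
  have hn1 : 1 ≤ Fintype.card (V₁ × V₂) := by omega
  set n₁ : ℕ := Fintype.card V₁ with hn₁
  set n₂ : ℕ := Fintype.card V₂ with hn₂
  have hprod : Fintype.card (V₁ × V₂) = n₁ * n₂ := Fintype.card_prod V₁ V₂
  set y : ℝ := ((t : ℝ) + 1) * (Fintype.card (V₁ × V₂) : ℝ) with hy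
  have hy1 : (1 : ℝ) ≤ y := by
    rw [hy]
    have h1 : (1 : ℝ) ≤ (t : ℝ) + 1 := by
      have := Nat.cast_nonneg (α := ℝ) t
      linarith
    have h2 : (1 : ℝ) ≤ (Fintype.card (V₁ × V₂) : ℝ) := by exact_mod_cast hn1
    nlinarith
  have hy0 : (0 : ℝ) < y := by linarith
  set x : ℝ := y ^ ((1 : ℝ) / 3) with hx
  have hx1 : (1 : ℝ) ≤ x := Real.one_le_rpow hy1 (by norm_num)
  have hx0 : (0 : ℝ) < x := by linarith
  set M : ℕ := ⌈x⌉₊ with hM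
  have hM1 : 1 ≤ M := by
    rw [hM]
    exact Nat.one_le_ceil_iff.mpr hx0
  have hMx : x ≤ (M : ℝ) := Nat.le_ceil x
  set m : ℕ := M - 1 with hm
  have hmM : m + 1 = M := by omega
  have hmx : (m : ℝ) ≤ x := by
    have h1 : ((M : ℝ)) < x + 1 := Nat.ceil_lt_add_one (by linarith)
    have h2 : (m : ℝ) = (M : ℝ) - 1 := by
      rw [hm]
      push_cast [Nat.cast_sub hM1]
      ring
    linarith
  obtain ⟨S₁, hS₁card, hS₁comp⟩ := sep_final H₁ t m h₁
  obtain ⟨S₂, hS₂card, hS₂comp⟩ := sep_final H₂ t m h₂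
  rw [hmM] at hS₁card hS₂card
  refine ⟨fun p => if p.1 ∈ S₁ ∨ p.2 ∈ S₂ then 0 else 1, ?_⟩
  intro A hmono hconn
  obtain ⟨⟨a, haA⟩⟩ := hconn.nonempty
  rw [Finset.mem_coe] at haA
  have hy23 : (0 : ℝ) ≤ y ^ ((2 : ℝ) / 3) := Real.rpow_nonneg (le_of_lt hy0) _
  by_cases hcol : a.1 ∈ S₁ ∨ a.2 ∈ S₂
  · -- "red" class : bounded by the whole red set
    have hfa : (if a.1 ∈ S₁ ∨ a.2 ∈ S₂ then (0 : Fin 2) else 1) = 0 := if_pos hcol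
    have hred : ∀ p ∈ A, p.1 ∈ S₁ ∨ p.2 ∈ S₂ := by
      intro p hp
      by_contra hcon
      have h9 : (if p.1 ∈ S₁ ∨ p.2 ∈ S₂ then (0 : Fin 2) else 1)
          = (if a.1 ∈ S₁ ∨ a.2 ∈ S₂ then (0 : Fin 2) else 1) := hmono p hp a haA
      rw [hfa, if_neg hcon] at h9
      simp at h9
    have hsub : A ⊆ (S₁ ×ˢ (Finset.univ : Finset V₂)) ∪ ((Finset.univ : Finset V₁) ×ˢ S₂) := by
      intro p hp
      rcases hred p hp with h | h
      · exact Finset.mem_union_left _ (Finset.mem_product.mpr ⟨h, Finset.mem_univ _⟩)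
      · exact Finset.mem_union_right _ (Finset.mem_product.mpr ⟨Finset.mem_univ _, h⟩)
    have hcard : A.card ≤ S₁.card * n₂ + n₁ * S₂.card := by
      calc A.card ≤ ((S₁ ×ˢ (Finset.univ : Finset V₂)) ∪
              ((Finset.univ : Finset V₁) ×ˢ S₂)).card := Finset.card_le_card hsub
        _ ≤ (S₁ ×ˢ (Finset.univ : Finset V₂)).card +
              ((Finset.univ : Finset V₁) ×ˢ S₂).card := Finset.card_union_le _ _
        _ = S₁.card * n₂ + n₁ * S₂.card := by
            rw [Finset.card_product, Finset.card_product, Finset.card_univ, Finset.card_univ]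
    -- real arithmetic
    have hdiv₁ : ((n₁ / M : ℕ) : ℝ) ≤ (n₁ : ℝ) / x := by
      calc ((n₁ / M : ℕ) : ℝ) ≤ (n₁ : ℝ) / (M : ℝ) := Nat.cast_div_le
        _ ≤ (n₁ : ℝ) / x := by
            apply div_le_div_of_nonneg_left _ hx0 hMx
            · positivity
    have hdiv₂ : ((n₂ / M : ℕ) : ℝ) ≤ (n₂ : ℝ) / x := by
      calc ((n₂ / M : ℕ) : ℝ) ≤ (n₂ : ℝ) / (M : ℝ) := Nat.cast_div_le
        _ ≤ (n₂ : ℝ) / x := by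
            apply div_le_div_of_nonneg_left _ hx0 hMx
            · positivity
    have hS₁r : (S₁.card : ℝ) ≤ ((t : ℝ) + 1) * ((n₁ : ℝ) / x) := by
      have h1 : (S₁.card : ℝ) ≤ ((t + 1) * (n₁ / M) : ℕ) := by exact_mod_cast hS₁card
      calc (S₁.card : ℝ) ≤ ((t + 1) * (n₁ / M) : ℕ) := h1
        _ = ((t : ℝ) + 1) * ((n₁ / M : ℕ) : ℝ) := by push_cast; ring
        _ ≤ ((t : ℝ) + 1) * ((n₁ : ℝ) / x) := by
            apply mul_le_mul_of_nonneg_left hdiv₁ (by positivity)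
    have hS₂r : (S₂.card : ℝ) ≤ ((t : ℝ) + 1) * ((n₂ : ℝ) / x) := by
      have h1 : (S₂.card : ℝ) ≤ ((t + 1) * (n₂ / M) : ℕ) := by exact_mod_cast hS₂card
      calc (S₂.card : ℝ) ≤ ((t + 1) * (n₂ / M) : ℕ) := h1
        _ = ((t : ℝ) + 1) * ((n₂ / M : ℕ) : ℝ) := by push_cast; ring
        _ ≤ ((t : ℝ) + 1) * ((n₂ : ℝ) / x) := by
            apply mul_le_mul_of_nonneg_left hdiv₂ (by positivity)
    have hyx : y / x = y ^ ((2 : ℝ) / 3) := by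
      rw [hx]
      rw [show (2 : ℝ) / 3 = 1 - 1 / 3 by norm_num, Real.rpow_sub hy0, Real.rpow_one]
    have hAr : (A.card : ℝ) ≤ 2 * (y / x) := by
      have h2 : (A.card : ℝ) ≤ (S₁.card : ℝ) * (n₂ : ℝ) + (n₁ : ℝ) * (S₂.card : ℝ) := by
        exact_mod_cast hcard
      have h3 : (S₁.card : ℝ) * (n₂ : ℝ) ≤ ((t : ℝ) + 1) * ((n₁ : ℝ) / x) * (n₂ : ℝ) := by
        apply mul_le_mul_of_nonneg_right hS₁r (by positivity)
      have h4 : (n₁ : ℝ) * (S₂.card : ℝ) ≤ (n₁ : ℝ) * (((t : ℝ) + 1) * ((n₂ : ℝ) / x)) := by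
        apply mul_le_mul_of_nonneg_left hS₂r (by positivity)
      have h5 : y = ((t : ℝ) + 1) * ((n₁ : ℝ) * (n₂ : ℝ)) := by
        rw [hy, hprod]; push_cast; ring
      have h6 : ((t : ℝ) + 1) * ((n₁ : ℝ) / x) * (n₂ : ℝ) = y / x := by
        rw [h5]; field_simp
      have h7 : (n₁ : ℝ) * (((t : ℝ) + 1) * ((n₂ : ℝ) / x)) = y / x := by
        rw [h5]; field_simp
      linarith
    calc (A.card : ℝ) ≤ 2 * (y / x) := hAr
      _ = 2 * y ^ ((2 : ℝ) / 3) := by rw [hyx]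
  · -- "blue" class : contained in a product of two small connected projections
    have hfa : (if a.1 ∈ S₁ ∨ a.2 ∈ S₂ then (0 : Fin 2) else 1) = 1 := if_neg hcol
    have hblue : ∀ p ∈ A, p.1 ∉ S₁ ∧ p.2 ∉ S₂ := by
      intro p hp
      by_contra hcon
      rw [not_and_or, not_not, not_not] at hcon
      have h9 : (if p.1 ∈ S₁ ∨ p.2 ∈ S₂ then (0 : Fin 2) else 1)
          = (if a.1 ∈ S₁ ∨ a.2 ∈ S₂ then (0 : Fin 2) else 1) := hmono p hp a haA
      rw [hfa, if_pos hcon] at h9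
      simp at h9
    have hA₁ : ∀ u ∈ A.image Prod.fst, u ∉ S₁ := by
      intro u hu
      obtain ⟨p, hpA, rfl⟩ := Finset.mem_image.mp hu
      exact (hblue p hpA).1
    have hA₂ : ∀ u ∈ A.image Prod.snd, u ∉ S₂ := by
      intro u hu
      obtain ⟨p, hpA, rfl⟩ := Finset.mem_image.mp hu
      exact (hblue p hpA).2
    have hc₁ : (A.image Prod.fst).card ≤ m := hS₁comp _ hA₁ (proj_conn_fst hconn)
    have hc₂ : (A.image Prod.snd).card ≤ m := hS₂comp _ hA₂ (proj_conn_snd hconn)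
    have hsub : A ⊆ (A.image Prod.fst) ×ˢ (A.image Prod.snd) := by
      intro p hp
      exact Finset.mem_product.mpr ⟨Finset.mem_image_of_mem _ hp, Finset.mem_image_of_mem _ hp⟩
    have hcard : A.card ≤ m * m := by
      calc A.card ≤ ((A.image Prod.fst) ×ˢ (A.image Prod.snd)).card := Finset.card_le_card hsub
        _ = (A.image Prod.fst).card * (A.image Prod.snd).card := Finset.card_product _ _
        _ ≤ m * m := Nat.mul_le_mul hc₁ hc₂
    have hxx : x * x = y ^ ((2 : ℝ) / 3) := by
      rw [hx, ← Real.rpow_add hy0]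
      norm_num
    have h1 : (A.card : ℝ) ≤ (m : ℝ) * (m : ℝ) := by exact_mod_cast hcard
    have h2 : (m : ℝ) * (m : ℝ) ≤ x * x := by
      apply mul_le_mul hmx hmx (by positivity) (by positivity)
    calc (A.card : ℝ) ≤ x * x := by linarith
      _ = y ^ ((2 : ℝ) / 3) := hxx
      _ ≤ 2 * y ^ ((2 : ℝ) / 3) := by linarith
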